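/- arXiv:1407.0216 — 3 statements merged into one kernel-verified Lean document; each statement's English description precedes it below -/
import Mathlib

section
/- If q ∈ L¹[0,1] is not a.e. zero and ρ(m) = max( sup_x |∫₀ˣ q(t)e^{−4πimt}dt|, sup_x |∫₀ˣ q(t)e^{4πimt}dt| ), then there exist C > 0 and N such that ρ(m) > C/m for all m ≥ N. -/
open MeasureTheory Real Set

/-- Key inequality: integration by parts (via Fubini on the triangle) shows that
the partial integrals of `q` are controlled by the oscillatory partial integrals. -/
lemma stmt_3_key (q : ℝ → ℂ) (hq : IntegrableOn q (Set.Icc 0 1))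
    (lam : ℝ) (hlam : 0 < lam) (x : ℝ) (hx0 : 0 ≤ x) (hx1 : x ≤ 1) :
    ‖∫ t in (0:ℝ)..x, q t‖ ≤ (1 + lam) *
      ⨆ y : Set.Icc (0:ℝ) 1,
        ‖∫ t in (0:ℝ)..(y:ℝ), q t * Complex.exp (-(lam * t) * Complex.I)‖ := by
  set c : ℂ := (lam : ℂ) * Complex.I with hcdef
  have hcne : c ≠ 0 := mul_ne_zero (Complex.ofReal_ne_zero.2 hlam.ne') Complex.I_ne_zero
  set f : ℝ → ℂ := fun t => q t * Complex.exp (-(lam * t) * Complex.I) with hfdef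
  set g : ℝ → ℂ := fun s => Complex.exp (c * s) with hgdef
  -- norms of the exponentials
  have hnorm1 : ∀ t : ℝ, ‖Complex.exp (-((lam : ℂ) * t) * Complex.I)‖ = 1 := by
    intro t
    rw [Complex.norm_exp]
    have : (-((lam : ℂ) * t) * Complex.I).re = 0 := by simp
    rw [this, Real.exp_zero]
  have hnorm2 : ∀ s : ℝ, ‖g s‖ = 1 := by
    intro s
    rw [hgdef]
    simp only
    rw [Complex.norm_exp]
    have : (c * (s : ℂ)).re = 0 := by simp [hcdef]
    rw [this, Real.exp_zero]
  -- `f * g = q`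
  have hfg : ∀ t : ℝ, f t * g t = q t := by
    intro t
    simp only [hfdef, hgdef]
    rw [mul_assoc, ← Complex.exp_add]
    have : -((lam : ℂ) * t) * Complex.I + c * t = 0 := by rw [hcdef]; ring
    rw [this, Complex.exp_zero, mul_one]
  -- continuity / integrability
  have hc1 : Continuous fun t : ℝ => Complex.exp (-((lam : ℂ) * t) * Complex.I) := by
    fun_prop
  have hc2 : Continuous g := by rw [hgdef]; fun_prop
  have hfInt : IntegrableOn f (Set.Icc 0 1) := by
    refine Integrable.mono' hq.norm
      ((hq.aestronglyMeasurable).mul (hc1.aestronglyMeasurable.restrict)) ?_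
    filter_upwards with t
    rw [hfdef]
    simp only
    rw [norm_mul, hnorm1, mul_one]
  have hsub : Set.Ioc (0:ℝ) x ⊆ Set.Icc 0 1 := fun t ht => ⟨le_of_lt ht.1, ht.2.trans hx1⟩
  have hfIx : IntegrableOn f (Set.Ioc 0 x) := hfInt.mono_set hsub
  have hqIx : IntegrableOn q (Set.Ioc 0 x) := hq.mono_set hsub
  have hgIx : IntegrableOn g (Set.Ioc 0 x) := hc2.integrableOn_Ioc
  -- the supremum
  set A : ℝ := ⨆ y : Set.Icc (0:ℝ) 1,
      ‖∫ t in (0:ℝ)..(y:ℝ), q t * Complex.exp (-(lam * t) * Complex.I)‖ with hAdef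
  have hbdd : BddAbove (Set.range fun y : Set.Icc (0:ℝ) 1 =>
      ‖∫ t in (0:ℝ)..(y:ℝ), q t * Complex.exp (-(lam * t) * Complex.I)‖) := by
    refine ⟨∫ t in Set.Icc (0:ℝ) 1, ‖q t‖, ?_⟩
    rintro r ⟨⟨y, hy0, hy1⟩, rfl⟩
    have h1 : ‖∫ t in (0:ℝ)..y, q t * Complex.exp (-(lam * t) * Complex.I)‖
        ≤ ∫ t in (0:ℝ)..y, ‖q t * Complex.exp (-(lam * t) * Complex.I)‖ :=
      intervalIntegral.norm_integral_le_integral_norm hy0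
    refine h1.trans ?_
    rw [intervalIntegral.integral_of_le hy0]
    have h2 : ∫ t in Set.Ioc (0:ℝ) y, ‖q t * Complex.exp (-(lam * t) * Complex.I)‖
        = ∫ t in Set.Ioc (0:ℝ) y, ‖q t‖ := by
      refine setIntegral_congr_fun measurableSet_Ioc fun t _ => ?_
      rw [norm_mul, hnorm1, mul_one]
    rw [h2]
    refine setIntegral_mono_set hq.norm ?_ ?_
    · filter_upwards with t using norm_nonneg _
    · exact HasSubset.Subset.eventuallyLE fun t ht => ⟨le_of_lt ht.1, ht.2.trans hy1⟩
  have hFA : ∀ y : ℝ, 0 ≤ y → y ≤ 1 → ‖∫ t in Set.Ioc (0:ℝ) y, f t‖ ≤ A := by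
    intro y h0 h1
    rw [← intervalIntegral.integral_of_le h0]
    exact le_ciSup hbdd (⟨y, h0, h1⟩ : Set.Icc (0:ℝ) 1)
  have hA0 : 0 ≤ A := le_trans (norm_nonneg _) (hFA 0 le_rfl zero_le_one)
  -- Fubini on the triangle
  set k : ℝ × ℝ → ℂ := {p : ℝ × ℝ | p.2 ≤ p.1}.indicator (fun p => g p.1 * f p.2) with hkdef
  have hmeasS : MeasurableSet {p : ℝ × ℝ | p.2 ≤ p.1} :=
    measurableSet_le measurable_snd measurable_fst
  have hkInt : Integrable k
      ((volume.restrict (Set.Ioc (0:ℝ) x)).prod (volume.restrict (Set.Ioc (0:ℝ) x))) := by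
    rw [hkdef]
    exact (hgIx.mul_prod hfIx).indicator hmeasS
  have step1 : ∫ s in Set.Ioc (0:ℝ) x, (∫ t in Set.Ioc (0:ℝ) x, k (s, t))
      = ∫ s in Set.Ioc (0:ℝ) x, g s * (∫ t in Set.Ioc (0:ℝ) s, f t) := by
    refine setIntegral_congr_fun measurableSet_Ioc fun s hs => ?_
    have hfun : (fun t => k (s, t)) = (Set.Iic s).indicator (fun t => g s * f t) := by
      funext t
      by_cases h : t ≤ s <;>
        simp [hkdef, Set.indicator_apply, h]
    rw [hfun, setIntegral_indicator measurableSet_Iic]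
    have hset : Set.Ioc (0:ℝ) x ∩ Set.Iic s = Set.Ioc 0 s := by
      rw [Set.Ioc_inter_Iic, min_eq_right hs.2]
    rw [hset, integral_const_mul]
  have step3 : ∫ t in Set.Ioc (0:ℝ) x, (∫ s in Set.Ioc (0:ℝ) x, k (s, t))
      = ∫ t in Set.Ioc (0:ℝ) x, f t * ((g x - g t) / c) := by
    refine setIntegral_congr_fun measurableSet_Ioc fun t ht => ?_
    have hfun : (fun s => k (s, t)) = (Set.Ici t).indicator (fun s => g s * f t) := by
      funext s
      by_cases h : t ≤ s <;>
        simp [hkdef, Set.indicator_apply, h]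
    rw [hfun, setIntegral_indicator measurableSet_Ici]
    have hset : Set.Ioc (0:ℝ) x ∩ Set.Ici t = Set.Icc t x := by
      ext s
      simp only [Set.mem_inter_iff, Set.mem_Ioc, Set.mem_Ici, Set.mem_Icc]
      constructor
      · rintro ⟨⟨_, h2⟩, h3⟩; exact ⟨h3, h2⟩
      · rintro ⟨h1, h2⟩; exact ⟨⟨lt_of_lt_of_le ht.1 h1, h2⟩, h1⟩
    rw [hset, integral_Icc_eq_integral_Ioc, integral_mul_const,
      ← intervalIntegral.integral_of_le ht.2]
    have : ∫ s in t..x, g s = (g x - g t) / c := by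
      rw [hgdef]
      simp only
      rw [integral_exp_mul_complex hcne]
    rw [this, mul_comm]
  have step4 : ∫ t in Set.Ioc (0:ℝ) x, f t * ((g x - g t) / c)
      = ((∫ t in Set.Ioc (0:ℝ) x, f t) * g x - ∫ t in Set.Ioc (0:ℝ) x, q t) / c := by
    have hptw : ∀ t ∈ Set.Ioc (0:ℝ) x, f t * ((g x - g t) / c) = (f t * g x - q t) * c⁻¹ := by
      intro t _
      rw [← hfg t, div_eq_mul_inv]
      ring
    rw [setIntegral_congr_fun measurableSet_Ioc hptw, integral_mul_const,
      integral_sub (hfIx.mul_const (g x)) hqIx, integral_mul_const, div_eq_mul_inv]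
  have hswap : ∫ s in Set.Ioc (0:ℝ) x, (∫ t in Set.Ioc (0:ℝ) x, k (s, t))
      = ∫ t in Set.Ioc (0:ℝ) x, (∫ s in Set.Ioc (0:ℝ) x, k (s, t)) :=
    integral_integral_swap hkInt
  have hE : ∫ s in Set.Ioc (0:ℝ) x, g s * (∫ t in Set.Ioc (0:ℝ) s, f t)
      = ((∫ t in Set.Ioc (0:ℝ) x, f t) * g x - ∫ t in Set.Ioc (0:ℝ) x, q t) / c := by
    rw [← step1, hswap, step3, step4]
  -- rearrange
  have hGeq : ∫ t in Set.Ioc (0:ℝ) x, q t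
      = (∫ t in Set.Ioc (0:ℝ) x, f t) * g x
        - c * ∫ s in Set.Ioc (0:ℝ) x, g s * (∫ t in Set.Ioc (0:ℝ) s, f t) := by
    rw [hE]
    field_simp
    ring
  -- norm bounds
  have hEbound : ‖∫ s in Set.Ioc (0:ℝ) x, g s * (∫ t in Set.Ioc (0:ℝ) s, f t)‖ ≤ A := by
    have h1 : ‖∫ s in Set.Ioc (0:ℝ) x, g s * (∫ t in Set.Ioc (0:ℝ) s, f t)‖
        ≤ A * (volume (Set.Ioc (0:ℝ) x)).toReal := by
      refine norm_setIntegral_le_of_norm_le_const measure_Ioc_lt_top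
        fun s hs => ?_
      rw [norm_mul, hnorm2, one_mul]
      exact hFA s hs.1.le (hs.2.trans hx1)
    refine h1.trans ?_
    rw [Real.volume_Ioc, ENNReal.toReal_ofReal (by linarith)]
    calc A * (x - 0) ≤ A * 1 := by
          refine mul_le_mul_of_nonneg_left (by linarith) hA0
      _ = A := mul_one A
  have hcnorm : ‖c‖ = lam := by
    rw [hcdef, norm_mul, Complex.norm_I, mul_one, Complex.norm_real,
      Real.norm_eq_abs, abs_of_pos hlam]
  have hFxA : ‖∫ t in Set.Ioc (0:ℝ) x, f t‖ ≤ A := hFA x hx0 hx1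
  calc ‖∫ t in (0:ℝ)..x, q t‖ = ‖∫ t in Set.Ioc (0:ℝ) x, q t‖ := by
        rw [intervalIntegral.integral_of_le hx0]
    _ = ‖(∫ t in Set.Ioc (0:ℝ) x, f t) * g x
          - c * ∫ s in Set.Ioc (0:ℝ) x, g s * (∫ t in Set.Ioc (0:ℝ) s, f t)‖ := by rw [hGeq]
    _ ≤ ‖(∫ t in Set.Ioc (0:ℝ) x, f t) * g x‖
          + ‖c * ∫ s in Set.Ioc (0:ℝ) x, g s * (∫ t in Set.Ioc (0:ℝ) s, f t)‖ :=
        norm_sub_le _ _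
    _ ≤ A + lam * A := by
        refine add_le_add ?_ ?_
        · rw [norm_mul, hnorm2, mul_one]; exact hFxA
        · rw [norm_mul, hcnorm]
          exact mul_le_mul_of_nonneg_left hEbound hlam.le
    _ = (1 + lam) * A := by ring

/-- Inequality (rhoineq): if `q ∈ L¹[0,1]` is not a.e. zero (some partial
integral is nonzero), then `ρ(m) > C/m` for all large `m`. -/
theorem stmt_3 (q : ℝ → ℂ) (hq : IntegrableOn q (Set.Icc 0 1))
    (hne : ∃ x ∈ Set.Icc (0:ℝ) 1, (∫ t in (0:ℝ)..x, q t) ≠ 0)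
    (ρ : ℕ → ℝ)
    (hρ : ∀ m : ℕ, ρ m =
      max (⨆ x : Set.Icc (0:ℝ) 1,
            ‖∫ t in (0:ℝ)..(x:ℝ), q t * Complex.exp (-(4 * Real.pi * m * t) * Complex.I)‖)
          (⨆ x : Set.Icc (0:ℝ) 1,
            ‖∫ t in (0:ℝ)..(x:ℝ), q t * Complex.exp ((4 * Real.pi * m * t) * Complex.I)‖)) :
    ∃ C > 0, ∃ N : ℕ, ∀ m ≥ N, ρ m > C / m := by
  obtain ⟨x₀, hx₀, hGne⟩ := hne
  have hcpos : 0 < ‖∫ t in (0:ℝ)..x₀, q t‖ := norm_pos_iff.2 hGne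
  set cst : ℝ := ‖∫ t in (0:ℝ)..x₀, q t‖ with hcst
  refine ⟨cst / (2 * (1 + 4 * Real.pi)), by positivity, 1, ?_⟩
  intro m hm
  have hm1 : (1:ℝ) ≤ m := by exact_mod_cast hm
  have hmpos : (0:ℝ) < m := lt_of_lt_of_le one_pos hm1
  have hlam : 0 < 4 * Real.pi * (m:ℝ) :=
    mul_pos (mul_pos (by norm_num) Real.pi_pos) hmpos
  have hkey := stmt_3_key q hq (4 * Real.pi * (m:ℝ)) hlam x₀ hx₀.1 hx₀.2
  have hcast : ((4 * Real.pi * (m:ℝ) : ℝ) : ℂ) = 4 * (Real.pi : ℂ) * (m : ℂ) := by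
    push_cast
    ring
  simp only [hcast] at hkey
  set S : ℝ := ⨆ x : Set.Icc (0:ℝ) 1,
      ‖∫ t in (0:ℝ)..(x:ℝ), q t * Complex.exp (-(4 * Real.pi * m * t) * Complex.I)‖ with hS
  have hSρ : S ≤ ρ m := by rw [hρ m]; exact le_max_left _ _
  have hden : (0:ℝ) < 1 + 4 * Real.pi * m := by positivity
  have hρge : cst / (1 + 4 * Real.pi * m) ≤ ρ m := by
    rw [div_le_iff₀ hden]
    calc cst ≤ (1 + 4 * Real.pi * m) * S := hkey
      _ ≤ (1 + 4 * Real.pi * m) * ρ m := by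
          exact mul_le_mul_of_nonneg_left hSρ hden.le
      _ = ρ m * (1 + 4 * Real.pi * m) := by ring
  have hlt : cst / (2 * (1 + 4 * Real.pi)) / m < cst / (1 + 4 * Real.pi * m) := by
    rw [div_div]
    refine div_lt_div_of_pos_left hcpos hden ?_
    nlinarith [Real.pi_pos, hm1]
  exact lt_of_lt_of_le hlt hρge
end

section
/- Suppose q ∈ L¹[0,1] with ∫₀¹ q = 0, Q(x) = ∫₀ˣ q(t)dt, Q₀ = ∫₀¹ Q(x)dx, and ρ(m) as in (m-8). Then ∫₀¹ (Q(x)−Q₀)² q(x) e^{−i4πmx} dx → 0 as m → ∞, and in fact this integral is O(ρ(m)). -/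
open MeasureTheory Real Set Filter

set_option maxHeartbeats 1000000

lemma my_parts {f g : ℝ → ℂ} {x : ℝ} (hf : IntegrableOn f (Set.Ioc 0 x))
    (hg : IntegrableOn g (Set.Ioc 0 x)) :
    (∫ t in Set.Ioc (0:ℝ) x, f t) * (∫ t in Set.Ioc (0:ℝ) x, g t)
      = (∫ s in Set.Ioc (0:ℝ) x, f s * ∫ t in Set.Ioc (0:ℝ) s, g t)
        + ∫ s in Set.Ioc (0:ℝ) x, (∫ t in Set.Ioc (0:ℝ) s, f t) * g s := by
  set μ := volume.restrict (Set.Ioc (0:ℝ) x) with hμ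
  have hfi : Integrable f μ := hf
  have hgi : Integrable g μ := hg
  have hprod : Integrable (fun z : ℝ × ℝ => f z.1 * g z.2) (μ.prod μ) := hfi.mul_prod hgi
  have hS : MeasurableSet {z : ℝ × ℝ | z.2 ≤ z.1} :=
    measurableSet_le measurable_snd measurable_fst
  have key : (∫ t in Set.Ioc (0:ℝ) x, f t) * (∫ t in Set.Ioc (0:ℝ) x, g t)
      = ∫ z : ℝ × ℝ, f z.1 * g z.2 ∂(μ.prod μ) := (integral_prod_mul f g).symm
  rw [key, ← integral_add_compl hS hprod]
  have hA : (∫ z in {z : ℝ × ℝ | z.2 ≤ z.1}, f z.1 * g z.2 ∂(μ.prod μ))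
      = ∫ s in Set.Ioc (0:ℝ) x, f s * ∫ t in Set.Ioc (0:ℝ) s, g t := by
    rw [← integral_indicator hS, integral_prod _ (hprod.indicator hS)]
    refine integral_congr_ae ?_
    filter_upwards [ae_restrict_mem measurableSet_Ioc] with s hs
    have h1 : ∀ t : ℝ, ({z : ℝ × ℝ | z.2 ≤ z.1}.indicator (fun z => f z.1 * g z.2) (s, t))
        = (Set.Iic s).indicator (fun t => f s * g t) t := by
      intro t
      by_cases h : t ≤ s <;> simp [Set.indicator, h]
    simp_rw [h1]
    rw [integral_indicator measurableSet_Iic, hμ, Measure.restrict_restrict measurableSet_Iic]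
    have h2 : Set.Iic s ∩ Set.Ioc (0:ℝ) x = Set.Ioc 0 s := by
      ext t
      simp only [Set.mem_inter_iff, Set.mem_Iic, Set.mem_Ioc]
      exact ⟨fun ⟨h1', h2', _⟩ => ⟨h2', h1'⟩, fun ⟨h1', h2'⟩ => ⟨h2', h1', h2'.trans hs.2⟩⟩
    rw [h2, integral_const_mul]
  have hB : (∫ z in {z : ℝ × ℝ | z.2 ≤ z.1}ᶜ, f z.1 * g z.2 ∂(μ.prod μ))
      = ∫ s in Set.Ioc (0:ℝ) x, (∫ t in Set.Ioc (0:ℝ) s, f t) * g s := by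
    rw [← integral_indicator hS.compl, integral_prod_symm _ (hprod.indicator hS.compl)]
    refine integral_congr_ae ?_
    filter_upwards [ae_restrict_mem measurableSet_Ioc] with t ht
    have h1 : ∀ s : ℝ, ({z : ℝ × ℝ | z.2 ≤ z.1}ᶜ.indicator (fun z => f z.1 * g z.2) (s, t))
        = (Set.Iio t).indicator (fun s => f s * g t) s := by
      intro s
      by_cases h : s < t <;> simp [Set.indicator, h, not_lt.mp, not_le.mpr, le_of_not_gt]
    simp_rw [h1]
    rw [integral_indicator measurableSet_Iio, hμ, Measure.restrict_restrict measurableSet_Iio]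
    have h2 : Set.Iio t ∩ Set.Ioc (0:ℝ) x = Set.Ioo 0 t := by
      ext s
      simp only [Set.mem_inter_iff, Set.mem_Iio, Set.mem_Ioc, Set.mem_Ioo]
      exact ⟨fun ⟨h1', h2', _⟩ => ⟨h2', h1'⟩, fun ⟨h1', h2'⟩ => ⟨h2', h1', (h2'.trans_le ht.2).le⟩⟩
    rw [h2, integral_mul_const, ← integral_Ioc_eq_integral_Ioo]
  rw [hA, hB]

/-- Estimate (I123), first part: `∫₀¹ (Q−Q₀)² q e^{−i4πmx} dx = O(ρ(m))`,
and in particular the integral tends to `0` as `m → ∞`. -/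
theorem stmt_6 (q : ℝ → ℂ) (hq : IntegrableOn q (Set.Icc 0 1))
    (hq0 : (∫ t in (0:ℝ)..1, q t) = 0)
    (Q : ℝ → ℂ) (hQ : ∀ x, Q x = ∫ t in (0:ℝ)..x, q t)
    (Q₀ : ℂ) (hQ₀ : Q₀ = ∫ x in (0:ℝ)..1, Q x)
    (ρ : ℕ → ℝ)
    (hρ : ∀ m : ℕ, ρ m = max (⨆ x : Set.Icc (0:ℝ) 1,
            ‖∫ t in (0:ℝ)..(x:ℝ), q t * Complex.exp (-(4 * Real.pi * m * t) * Complex.I)‖)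
          (⨆ x : Set.Icc (0:ℝ) 1,
            ‖∫ t in (0:ℝ)..(x:ℝ), q t * Complex.exp ((4 * Real.pi * m * t) * Complex.I)‖)) :
    Filter.Tendsto
      (fun m : ℕ => ∫ x in (0:ℝ)..1,
        (Q x - Q₀) ^ 2 * q x * Complex.exp (-(4 * Real.pi * m * x) * Complex.I))
      Filter.atTop (nhds 0) ∧
    ∃ C : ℝ, ∃ N : ℕ, ∀ m ≥ N,
      ‖∫ x in (0:ℝ)..1,
        (Q x - Q₀) ^ 2 * q x * Complex.exp (-(4 * Real.pi * m * x) * Complex.I)‖ ≤ C * ρ m := by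
  have h01 : (1:ℝ) ∈ Set.Icc (0:ℝ) 1 := by norm_num
  have hsub : ∀ x ∈ Set.Icc (0:ℝ) 1, Set.Ioc (0:ℝ) x ⊆ Set.Icc (0:ℝ) 1 :=
    fun x hx t ht => ⟨ht.1.le, ht.2.trans hx.2⟩
  have hqx : ∀ x ∈ Set.Icc (0:ℝ) 1, IntegrableOn q (Set.Ioc 0 x) :=
    fun x hx => hq.mono_set (hsub x hx)
  have hq1 : IntegrableOn q (Set.Ioc 0 1) := hqx 1 h01
  have hQIoc : ∀ x ∈ Set.Icc (0:ℝ) 1, Q x = ∫ t in Set.Ioc (0:ℝ) x, q t := by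
    intro x hx
    rw [hQ, intervalIntegral.integral_of_le hx.1]
  have hnorm_e : ∀ m : ℕ, ∀ x : ℝ,
      ‖Complex.exp (-(4 * Real.pi * m * x) * Complex.I)‖ = 1 := by
    intro m x
    have h1 : (-(4 * Real.pi * m * x : ℂ) * Complex.I)
        = ((-(4 * Real.pi * m * x) : ℝ) : ℂ) * Complex.I := by push_cast; ring
    rw [h1, Complex.norm_exp_ofReal_mul_I]
  have he_cont : ∀ m : ℕ,
      Continuous (fun x : ℝ => Complex.exp (-(4 * Real.pi * m * x) * Complex.I)) := by
    intro m
    apply Complex.continuous_exp.comp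
    fun_prop
  -- integrability of q * e
  have hg : ∀ m : ℕ, IntegrableOn
      (fun t => q t * Complex.exp (-(4 * Real.pi * m * t) * Complex.I)) (Set.Icc 0 1) := by
    intro m
    have h1 : IntegrableOn
        (fun t : ℝ => Complex.exp (-(4 * Real.pi * m * t) * Complex.I) * q t) (Set.Icc 0 1) :=
      hq.bdd_mul (c := 1) (he_cont m).aestronglyMeasurable (Filter.Eventually.of_forall fun x => (hnorm_e m x).le)
    exact h1.congr (Filter.Eventually.of_forall fun t => mul_comm _ _)
  have hgx : ∀ m : ℕ, ∀ x ∈ Set.Icc (0:ℝ) 1, IntegrableOn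
      (fun t => q t * Complex.exp (-(4 * Real.pi * m * t) * Complex.I)) (Set.Ioc 0 x) :=
    fun m x hx => (hg m).mono_set (hsub x hx)
  set B : ℝ := ∫ t in Set.Ioc (0:ℝ) 1, ‖q t‖ with hB
  have hFB : ∀ m : ℕ, ∀ x ∈ Set.Icc (0:ℝ) 1,
      ‖∫ t in Set.Ioc (0:ℝ) x, q t * Complex.exp (-(4 * Real.pi * m * t) * Complex.I)‖ ≤ B := by
    intro m x hx
    calc ‖∫ t in Set.Ioc (0:ℝ) x, q t * Complex.exp (-(4 * Real.pi * m * t) * Complex.I)‖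
        ≤ ∫ t in Set.Ioc (0:ℝ) x, ‖q t * Complex.exp (-(4 * Real.pi * m * t) * Complex.I)‖ :=
          norm_integral_le_integral_norm _
      _ = ∫ t in Set.Ioc (0:ℝ) x, ‖q t‖ := by
          refine integral_congr_ae (Filter.Eventually.of_forall fun t => ?_)
          show ‖q t * _‖ = ‖q t‖
          rw [norm_mul, hnorm_e, mul_one]
      _ ≤ B := setIntegral_mono_set hq1.norm
          (Filter.Eventually.of_forall fun t => norm_nonneg _)
          (HasSubset.Subset.eventuallyLE (Set.Ioc_subset_Ioc_right hx.2))
  -- ρ bounds partial integrals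
  have hFρ : ∀ m : ℕ, ∀ x ∈ Set.Icc (0:ℝ) 1,
      ‖∫ t in Set.Ioc (0:ℝ) x, q t * Complex.exp (-(4 * Real.pi * m * t) * Complex.I)‖ ≤ ρ m := by
    intro m x hx
    have hval : (∫ t in Set.Ioc (0:ℝ) x, q t * Complex.exp (-(4 * Real.pi * m * t) * Complex.I))
        = ∫ t in (0:ℝ)..x, q t * Complex.exp (-(4 * Real.pi * m * t) * Complex.I) :=
      (intervalIntegral.integral_of_le hx.1).symm
    have hbdd : BddAbove (Set.range fun y : Set.Icc (0:ℝ) 1 =>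
        ‖∫ t in (0:ℝ)..(y:ℝ), q t * Complex.exp (-(4 * Real.pi * m * t) * Complex.I)‖) := by
      refine ⟨B, ?_⟩
      rintro c ⟨y, rfl⟩
      dsimp only
      rw [intervalIntegral.integral_of_le y.2.1]
      exact hFB m y y.2
    have hle : ‖∫ t in (0:ℝ)..x, q t * Complex.exp (-(4 * Real.pi * m * t) * Complex.I)‖
        ≤ ⨆ y : Set.Icc (0:ℝ) 1,
          ‖∫ t in (0:ℝ)..(y:ℝ), q t * Complex.exp (-(4 * Real.pi * m * t) * Complex.I)‖ :=
      le_ciSup hbdd ⟨x, hx⟩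
    rw [hval, hρ m]
    exact hle.trans (le_max_left _ _)
  have hρ0 : ∀ m : ℕ, 0 ≤ ρ m :=
    fun m => (norm_nonneg _).trans (hFρ m 1 h01)
  -- Q is bounded and measurable on [0,1]
  have hQc : ContinuousOn Q (Set.Icc (0:ℝ) 1) :=
    (intervalIntegral.continuousOn_primitive (f := q) (μ := volume) hq).congr
      fun x hx => hQIoc x hx
  have hQB : ∀ t ∈ Set.Icc (0:ℝ) 1, ‖Q t‖ ≤ B := by
    intro t ht
    rw [hQIoc t ht]
    calc ‖∫ s in Set.Ioc (0:ℝ) t, q s‖ ≤ ∫ s in Set.Ioc (0:ℝ) t, ‖q s‖ :=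
          norm_integral_le_integral_norm _
      _ ≤ B := setIntegral_mono_set hq1.norm
          (Filter.Eventually.of_forall fun s => norm_nonneg _)
          (HasSubset.Subset.eventuallyLE (Set.Ioc_subset_Ioc_right ht.2))
  have hQK : ∀ t ∈ Set.Icc (0:ℝ) 1, ‖Q t - Q₀‖ ≤ B + ‖Q₀‖ := by
    intro t ht
    calc ‖Q t - Q₀‖ ≤ ‖Q t‖ + ‖Q₀‖ := norm_sub_le _ _
      _ ≤ B + ‖Q₀‖ := add_le_add_left (hQB t ht) _
  -- h = 2(Q - Q₀) q is integrable on [0,1]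
  set h : ℝ → ℂ := fun s => (2 * (Q s - Q₀)) * q s with hh_def
  have hQm : AEStronglyMeasurable (fun s => 2 * (Q s - Q₀))
      (volume.restrict (Set.Icc (0:ℝ) 1)) :=
    (continuousOn_const.mul (hQc.sub continuousOn_const)).aestronglyMeasurable measurableSet_Icc
  have hh : IntegrableOn h (Set.Icc 0 1) := by
    refine Integrable.bdd_mul (c := 2 * (B + ‖Q₀‖)) hq hQm ?_
    filter_upwards [ae_restrict_mem measurableSet_Icc] with s hs
    rw [norm_mul, show ‖(2:ℂ)‖ = 2 by norm_num]
    exact mul_le_mul_of_nonneg_left (hQK s hs) (by norm_num)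
  have hhx : ∀ x ∈ Set.Icc (0:ℝ) 1, IntegrableOn h (Set.Ioc 0 x) :=
    fun x hx => hh.mono_set (hsub x hx)
  -- Q * q integrable
  have hQq : IntegrableOn (fun s => Q s * q s) (Set.Icc 0 1) := by
    refine Integrable.bdd_mul (c := B + ‖Q₀‖) hq
      (hQc.aestronglyMeasurable measurableSet_Icc) ?_
    filter_upwards [ae_restrict_mem measurableSet_Icc] with s hs
    exact (hQB s hs).trans (le_add_of_nonneg_right (norm_nonneg _))
  -- Claim A : (Q x - Q₀)² = Q₀² + ∫₀ˣ 2(Q-Q₀)q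
  have claimA : ∀ x ∈ Set.Icc (0:ℝ) 1,
      (Q x - Q₀) ^ 2 = Q₀ ^ 2 + ∫ s in Set.Ioc (0:ℝ) x, h s := by
    intro x hx
    have hp := my_parts (hqx x hx) (hqx x hx)
    have hcongr : ∀ s ∈ Set.Ioc (0:ℝ) x, (∫ t in Set.Ioc (0:ℝ) s, q t) = Q s :=
      fun s hs => (hQIoc s ⟨hs.1.le, hs.2.trans hx.2⟩).symm
    have h1 : (∫ s in Set.Ioc (0:ℝ) x, q s * ∫ t in Set.Ioc (0:ℝ) s, q t)
        = ∫ s in Set.Ioc (0:ℝ) x, Q s * q s := by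
      refine setIntegral_congr_fun measurableSet_Ioc fun s hs => ?_
      rw [hcongr s hs, mul_comm]
    have h2 : (∫ s in Set.Ioc (0:ℝ) x, (∫ t in Set.Ioc (0:ℝ) s, q t) * q s)
        = ∫ s in Set.Ioc (0:ℝ) x, Q s * q s := by
      refine setIntegral_congr_fun measurableSet_Ioc fun s hs => ?_
      rw [hcongr s hs]
    rw [h1, h2, ← hQIoc x hx] at hp
    have hHx : (∫ s in Set.Ioc (0:ℝ) x, h s)
        = 2 * (∫ s in Set.Ioc (0:ℝ) x, Q s * q s) - 2 * Q₀ * Q x := by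
      have hsplit : ∀ s : ℝ, h s = 2 * (Q s * q s) - (2 * Q₀) * q s := by
        intro s; rw [hh_def]; ring
      simp_rw [hsplit]
      rw [integral_sub ((hQq.mono_set (hsub x hx)).const_mul 2)
        ((hqx x hx).const_mul (2 * Q₀)), integral_const_mul, integral_const_mul,
        ← hQIoc x hx]
    rw [hHx]
    linear_combination hp
  -- H = ∫₀ˣ h is bounded and measurable
  set D : ℝ := ∫ s in Set.Ioc (0:ℝ) 1, ‖h s‖ with hD
  have hHc : ContinuousOn (fun x => ∫ s in Set.Ioc (0:ℝ) x, h s) (Set.Icc (0:ℝ) 1) :=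
    intervalIntegral.continuousOn_primitive hh
  have hHK : ∀ x ∈ Set.Icc (0:ℝ) 1, ‖∫ s in Set.Ioc (0:ℝ) x, h s‖ ≤ D := by
    intro x hx
    calc ‖∫ s in Set.Ioc (0:ℝ) x, h s‖ ≤ ∫ s in Set.Ioc (0:ℝ) x, ‖h s‖ :=
          norm_integral_le_integral_norm _
      _ ≤ D := setIntegral_mono_set (IntegrableOn.mono_set hh.norm Set.Ioc_subset_Icc_self)
          (Filter.Eventually.of_forall fun s => norm_nonneg _)
          (HasSubset.Subset.eventuallyLE (Set.Ioc_subset_Ioc_right hx.2))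
  -- key identity
  have key : ∀ m : ℕ, (∫ x in (0:ℝ)..1,
      (Q x - Q₀) ^ 2 * q x * Complex.exp (-(4 * Real.pi * m * x) * Complex.I))
      = (Q₀ ^ 2 + ∫ s in Set.Ioc (0:ℝ) 1, h s)
          * (∫ t in Set.Ioc (0:ℝ) 1, q t * Complex.exp (-(4 * Real.pi * m * t) * Complex.I))
        - ∫ s in Set.Ioc (0:ℝ) 1,
            h s * ∫ t in Set.Ioc (0:ℝ) s, q t * Complex.exp (-(4 * Real.pi * m * t) * Complex.I) := by
    intro m
    rw [intervalIntegral.integral_of_le zero_le_one]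
    have hint2 : IntegrableOn (fun x => (∫ s in Set.Ioc (0:ℝ) x, h s)
        * (q x * Complex.exp (-(4 * Real.pi * m * x) * Complex.I))) (Set.Ioc 0 1) := by
      refine Integrable.bdd_mul (c := D) ((hg m).mono_set Set.Ioc_subset_Icc_self)
        (((hHc.aestronglyMeasurable measurableSet_Icc)).mono_measure
          (Measure.restrict_mono Set.Ioc_subset_Icc_self le_rfl)) ?_
      filter_upwards [ae_restrict_mem measurableSet_Ioc] with x hx
      exact hHK x ⟨hx.1.le, hx.2⟩
    have step1 : (∫ x in Set.Ioc (0:ℝ) 1,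
        (Q x - Q₀) ^ 2 * q x * Complex.exp (-(4 * Real.pi * m * x) * Complex.I))
        = ∫ x in Set.Ioc (0:ℝ) 1, (Q₀ ^ 2 * (q x * Complex.exp (-(4 * Real.pi * m * x) * Complex.I))
            + (∫ s in Set.Ioc (0:ℝ) x, h s)
              * (q x * Complex.exp (-(4 * Real.pi * m * x) * Complex.I))) := by
      refine setIntegral_congr_fun measurableSet_Ioc fun x hx => ?_
      rw [claimA x ⟨hx.1.le, hx.2⟩]
      ring
    rw [step1, integral_add (((hg m).mono_set Set.Ioc_subset_Icc_self).const_mul _) hint2,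
      integral_const_mul]
    have hp := my_parts (hhx 1 h01) (hgx m 1 h01)
    -- hp : H1 * F1 = ∫ h * F + ∫ H * g
    have : (∫ x in Set.Ioc (0:ℝ) 1, (∫ s in Set.Ioc (0:ℝ) x, h s)
        * (q x * Complex.exp (-(4 * Real.pi * m * x) * Complex.I)))
        = (∫ s in Set.Ioc (0:ℝ) 1, h s)
            * (∫ t in Set.Ioc (0:ℝ) 1, q t * Complex.exp (-(4 * Real.pi * m * t) * Complex.I))
          - ∫ s in Set.Ioc (0:ℝ) 1,
              h s * ∫ t in Set.Ioc (0:ℝ) s, q t * Complex.exp (-(4 * Real.pi * m * t) * Complex.I) := by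
      rw [hp]; ring
    rw [this]
    ring
  -- Part 2: the bound
  have bound : ∀ m : ℕ, ‖∫ x in (0:ℝ)..1,
      (Q x - Q₀) ^ 2 * q x * Complex.exp (-(4 * Real.pi * m * x) * Complex.I)‖
      ≤ (‖Q₀ ^ 2 + ∫ s in Set.Ioc (0:ℝ) 1, h s‖ + D) * ρ m := by
    intro m
    rw [key m]
    have hb1 : ‖(Q₀ ^ 2 + ∫ s in Set.Ioc (0:ℝ) 1, h s)
        * (∫ t in Set.Ioc (0:ℝ) 1, q t * Complex.exp (-(4 * Real.pi * m * t) * Complex.I))‖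
        ≤ ‖Q₀ ^ 2 + ∫ s in Set.Ioc (0:ℝ) 1, h s‖ * ρ m := by
      rw [norm_mul]
      exact mul_le_mul_of_nonneg_left (hFρ m 1 h01) (norm_nonneg _)
    have hb2 : ‖∫ s in Set.Ioc (0:ℝ) 1,
        h s * ∫ t in Set.Ioc (0:ℝ) s, q t * Complex.exp (-(4 * Real.pi * m * t) * Complex.I)‖
        ≤ D * ρ m := by
      calc ‖∫ s in Set.Ioc (0:ℝ) 1,
          h s * ∫ t in Set.Ioc (0:ℝ) s, q t * Complex.exp (-(4 * Real.pi * m * t) * Complex.I)‖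
          ≤ ∫ s in Set.Ioc (0:ℝ) 1,
            ‖h s * ∫ t in Set.Ioc (0:ℝ) s, q t * Complex.exp (-(4 * Real.pi * m * t) * Complex.I)‖ :=
            norm_integral_le_integral_norm _
        _ ≤ ∫ s in Set.Ioc (0:ℝ) 1, ‖h s‖ * ρ m := by
            refine integral_mono_of_nonneg
              (Filter.Eventually.of_forall fun s => norm_nonneg _)
              ((IntegrableOn.mono_set hh.norm Set.Ioc_subset_Icc_self).mul_const _) ?_
            filter_upwards [ae_restrict_mem measurableSet_Ioc] with s hs
            rw [norm_mul]
            exact mul_le_mul_of_nonneg_left (hFρ m s ⟨hs.1.le, hs.2⟩) (norm_nonneg _)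
        _ = D * ρ m := by rw [integral_mul_const]
    calc ‖_ - _‖ ≤ _ + _ := norm_sub_le _ _
      _ ≤ ‖Q₀ ^ 2 + ∫ s in Set.Ioc (0:ℝ) 1, h s‖ * ρ m + D * ρ m := add_le_add hb1 hb2
      _ = (‖Q₀ ^ 2 + ∫ s in Set.Ioc (0:ℝ) 1, h s‖ + D) * ρ m := by ring
  constructor
  · -- Riemann-Lebesgue
    have hf0 : IntegrableOn (fun x => (Q x - Q₀) ^ 2 * q x) (Set.Ioc 0 1) := by
      refine (Integrable.bdd_mul (c := (B + ‖Q₀‖) ^ 2)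
        (hq.mono_set Set.Ioc_subset_Icc_self)
        ((((hQc.sub continuousOn_const).pow 2).aestronglyMeasurable
          measurableSet_Icc).mono_measure
          (Measure.restrict_mono Set.Ioc_subset_Icc_self le_rfl)) ?_)
      filter_upwards [ae_restrict_mem measurableSet_Ioc] with s hs
      rw [norm_pow]
      exact pow_le_pow_left₀ (norm_nonneg _) (hQK s ⟨hs.1.le, hs.2⟩) 2
    set φ : ℝ → ℂ := (Set.Ioc (0:ℝ) 1).indicator (fun x => (Q x - Q₀) ^ 2 * q x) with hφ
    have htend2m : Filter.Tendsto (fun m : ℕ => 2 * (m:ℝ)) Filter.atTop (cocompact ℝ) := by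
      rw [cocompact_eq_atBot_atTop]
      exact (tendsto_natCast_atTop_atTop.const_mul_atTop two_pos).mono_right le_sup_right
    have hRL := (Real.tendsto_integral_exp_smul_cocompact φ).comp htend2m
    refine hRL.congr fun m => ?_
    show (∫ v : ℝ, Real.fourierChar (-(v * (2 * (m:ℝ)))) • φ v) = _
    have hpt : ∀ v : ℝ, Real.fourierChar (-(v * (2 * (m:ℝ)))) • φ v
        = (Set.Ioc (0:ℝ) 1).indicator
          (fun v => (Q v - Q₀) ^ 2 * q v * Complex.exp (-(4 * Real.pi * m * v) * Complex.I)) v := by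
      intro v
      rw [Circle.smul_def, Real.fourierChar_apply, hφ]
      by_cases hv : v ∈ Set.Ioc (0:ℝ) 1
      · rw [Set.indicator_of_mem hv, Set.indicator_of_mem hv]
        have hexp : (↑(2 * Real.pi * -(v * (2 * (m:ℝ)))) : ℂ) * Complex.I
            = -(4 * Real.pi * m * v) * Complex.I := by
          push_cast
          ring
        rw [hexp, smul_eq_mul]
        ring
      · rw [Set.indicator_of_notMem hv, Set.indicator_of_notMem hv, smul_zero]
    simp_rw [hpt]
    rw [integral_indicator measurableSet_Ioc, ← intervalIntegral.integral_of_le zero_le_one]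
  · exact ⟨_, 0, fun m _ => bound m⟩
end

section
/- Let (q_k)_{k∈ℤ} be a bounded sequence of complex numbers. Then for m ≥ 2, the double sum Σ_{m₁,m₂} |q_{m₁} q_{m₂}| / (|m₁||2m−m₁| |m₁+m₂||2m−m₁−m₂|), taken over integers m₁, m₂ with m₁ ≠ 0, m₁+m₂ ≠ 0, m₁ ≠ 2m, m₁+m₂ ≠ 2m, is bounded by C·M²·((log m)/m)² for an absolute constant C, where M = sup_k |q_k|. -/
open Real


noncomputable def Hsum (N : ℕ) : ℝ := ∑ i ∈ Finset.range N, (1:ℝ)/(i+1)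

lemma Hsum_nonneg (N : ℕ) : 0 ≤ Hsum N :=
  Finset.sum_nonneg fun i _ => by positivity

lemma Hsum_mono {a b : ℕ} (h : a ≤ b) : Hsum a ≤ Hsum b :=
  Finset.sum_le_sum_of_subset_of_nonneg (Finset.range_subset_range.2 h) fun i _ _ => by positivity

lemma Hsum_le (N : ℕ) : Hsum N ≤ 1 + Real.log N := by
  have h := harmonic_le_one_add_log N
  have e : Hsum N = ((harmonic N : ℚ) : ℝ) := by
    rw [Hsum, harmonic]
    push_cast
    simp [one_div]
  rw [e]; exact h

lemma h_nonneg (N k : ℕ) : (0:ℝ) ≤ 1/((k:ℝ)+1) - 1/((k:ℝ)+1+N) := by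
  have h1 : (0:ℝ) < (k:ℝ)+1 := by positivity
  have h2 : ((k:ℝ)+1) ≤ (k:ℝ)+1+N := le_add_of_nonneg_right (Nat.cast_nonneg N)
  have := one_div_le_one_div_of_le h1 h2
  linarith

lemma tele (N : ℕ) (v : Finset ℕ) :
    ∑ k ∈ v, ((1:ℝ)/((k:ℝ)+1) - 1/((k:ℝ)+1+N)) ≤ Hsum N := by
  obtain ⟨n, hn⟩ := v.exists_nat_subset_range
  have step1 : ∑ k ∈ v, ((1:ℝ)/((k:ℝ)+1) - 1/((k:ℝ)+1+N))
      ≤ ∑ k ∈ Finset.range n, ((1:ℝ)/((k:ℝ)+1) - 1/((k:ℝ)+1+N)) :=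
    Finset.sum_le_sum_of_subset_of_nonneg hn fun i _ _ => h_nonneg N i
  have e2 : ∑ k ∈ Finset.range n, (1:ℝ)/((k:ℝ)+1+N) = Hsum (N+n) - Hsum N := by
    have h3 := Finset.sum_range_add (fun i => (1:ℝ)/((i:ℝ)+1)) N n
    have h4 : ∀ x ∈ Finset.range n, (1:ℝ)/((((N+x):ℕ):ℝ)+1) = 1/((x:ℝ)+1+N) := by
      intro x _; push_cast; ring_nf
    rw [Finset.sum_congr rfl h4] at h3
    rw [Hsum, Hsum, h3]; ring
  rw [Finset.sum_sub_distrib, Finset.sum_sub_distrib, e2] at step1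
  have hmono := Hsum_mono (Nat.le_add_left n N)
  have hr : ∑ k ∈ Finset.range n, (1:ℝ)/((k:ℝ)+1) = Hsum n := rfl
  rw [hr] at step1
  rw [Finset.sum_sub_distrib]
  linarith

lemma key_id {a b : ℝ} (ha : 0 < a) (hb : 0 < b) :
    1/(a*(a+b)) = (1/b) * (1/a - 1/(a+b)) := by
  have hab : a + b ≠ 0 := by positivity
  field_simp
  ring

lemma key_id2 {a b : ℝ} (ha : 0 < a) (hb : 0 < b) :
    1/(a*b) = (1/(a+b)) * (1/a + 1/b) := by
  have : a + b ≠ 0 := by positivity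
  field_simp
  ring
noncomputable def fm (m : ℕ) (n : ℤ) : ℝ :=
  if n ≠ 0 ∧ n ≠ 2*(m:ℤ) then 1/(|(n:ℝ)| * |2*(m:ℝ) - n|) else 0

lemma fm_nonneg (m : ℕ) (n : ℤ) : 0 ≤ fm m n := by
  rw [fm]; split
  · positivity
  · exact le_refl 0

lemma sum_neg_le (m : ℕ) (hm : 2 ≤ m) (u : Finset ℤ) (hu : ∀ n ∈ u, n < 0) :
    ∑ n ∈ u, fm m n ≤ Hsum (2*m) / (2*(m:ℝ)) := by
  classical
  have hmR : (0:ℝ) < (m:ℝ) := by exact_mod_cast (by omega : 0 < m)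
  set e : ℤ → ℕ := fun n => (-n-1).toNat with he
  have hinj : ∀ x ∈ u, ∀ y ∈ u, e x = e y → x = y := by
    intro x hx y hy hxy
    have hx' := hu x hx; have hy' := hu y hy
    simp only [he] at hxy
    omega
  have key : ∀ n ∈ u, fm m n
      = (1/(2*(m:ℝ))) * ((1:ℝ)/((e n : ℝ)+1) - 1/((e n : ℝ)+1+((2*m:ℕ):ℝ))) := by
    intro n hn
    have hneg := hu n hn
    have h1 : n ≠ 0 := by omega
    have h2 : n ≠ 2*(m:ℤ) := by omega
    have hnR : (n:ℝ) < 0 := by exact_mod_cast hneg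
    have hea : ((e n : ℕ):ℝ) + 1 = -(n:ℝ) := by
      have h5 : ((e n : ℕ):ℤ) = -n-1 := Int.toNat_of_nonneg (by omega)
      have h6 := congrArg (fun z : ℤ => (z:ℝ)) h5
      push_cast at h6
      rw [h6]; ring
    have h2m : ((2*m:ℕ):ℝ) = 2*(m:ℝ) := by push_cast; ring
    rw [fm, if_pos ⟨h1, h2⟩, abs_of_neg hnR,
        abs_of_pos (by linarith : (0:ℝ) < 2*(m:ℝ)-(n:ℝ)), hea, h2m,
        ← key_id (by linarith : (0:ℝ) < -(n:ℝ)) (by linarith : (0:ℝ) < 2*(m:ℝ))]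
    congr 1
    ring
  calc ∑ n ∈ u, fm m n
      = ∑ n ∈ u, (1/(2*(m:ℝ))) * ((1:ℝ)/((e n : ℝ)+1) - 1/((e n : ℝ)+1+((2*m:ℕ):ℝ))) :=
        Finset.sum_congr rfl key
    _ = (1/(2*(m:ℝ))) * ∑ n ∈ u, ((1:ℝ)/((e n : ℝ)+1) - 1/((e n : ℝ)+1+((2*m:ℕ):ℝ))) := by
        rw [Finset.mul_sum]
    _ = (1/(2*(m:ℝ))) * ∑ k ∈ u.image e, ((1:ℝ)/((k:ℝ)+1) - 1/((k:ℝ)+1+((2*m:ℕ):ℝ))) := by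
        rw [Finset.sum_image hinj]
    _ ≤ (1/(2*(m:ℝ))) * Hsum (2*m) := by
        have ht := tele (2*m) (u.image e)
        have : (0:ℝ) ≤ 1/(2*(m:ℝ)) := by positivity
        exact mul_le_mul_of_nonneg_left ht this
    _ = Hsum (2*m) / (2*(m:ℝ)) := by ring

lemma sum_pos_le (m : ℕ) (hm : 2 ≤ m) (u : Finset ℤ) (hu : ∀ n ∈ u, 2*(m:ℤ) < n) :
    ∑ n ∈ u, fm m n ≤ Hsum (2*m) / (2*(m:ℝ)) := by
  classical
  have hmR : (0:ℝ) < (m:ℝ) := by exact_mod_cast (by omega : 0 < m)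
  set e : ℤ → ℕ := fun n => (n-2*(m:ℤ)-1).toNat with he
  have hinj : ∀ x ∈ u, ∀ y ∈ u, e x = e y → x = y := by
    intro x hx y hy hxy
    have hx' := hu x hx; have hy' := hu y hy
    simp only [he] at hxy
    omega
  have key : ∀ n ∈ u, fm m n
      = (1/(2*(m:ℝ))) * ((1:ℝ)/((e n : ℝ)+1) - 1/((e n : ℝ)+1+((2*m:ℕ):ℝ))) := by
    intro n hn
    have hgt := hu n hn
    have h1 : n ≠ 0 := by omega
    have h2 : n ≠ 2*(m:ℤ) := by omega
    have hnR : 2*(m:ℝ) < (n:ℝ) := by exact_mod_cast hgt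
    have hea : ((e n : ℕ):ℝ) + 1 = (n:ℝ) - 2*(m:ℝ) := by
      have h5 : ((e n : ℕ):ℤ) = n-2*(m:ℤ)-1 := Int.toNat_of_nonneg (by omega)
      have h6 := congrArg (fun z : ℤ => (z:ℝ)) h5
      push_cast at h6
      rw [h6]; ring
    have h2m : ((2*m:ℕ):ℝ) = 2*(m:ℝ) := by push_cast; ring
    rw [fm, if_pos ⟨h1, h2⟩, abs_of_pos (by linarith : (0:ℝ) < (n:ℝ)),
        abs_of_neg (by linarith : 2*(m:ℝ)-(n:ℝ) < 0), hea, h2m,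
        ← key_id (by linarith : (0:ℝ) < (n:ℝ)-2*(m:ℝ)) (by linarith : (0:ℝ) < 2*(m:ℝ))]
    congr 1
    ring
  calc ∑ n ∈ u, fm m n
      = ∑ n ∈ u, (1/(2*(m:ℝ))) * ((1:ℝ)/((e n : ℝ)+1) - 1/((e n : ℝ)+1+((2*m:ℕ):ℝ))) :=
        Finset.sum_congr rfl key
    _ = (1/(2*(m:ℝ))) * ∑ n ∈ u, ((1:ℝ)/((e n : ℝ)+1) - 1/((e n : ℝ)+1+((2*m:ℕ):ℝ))) := by
        rw [Finset.mul_sum]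
    _ = (1/(2*(m:ℝ))) * ∑ k ∈ u.image e, ((1:ℝ)/((k:ℝ)+1) - 1/((k:ℝ)+1+((2*m:ℕ):ℝ))) := by
        rw [Finset.sum_image hinj]
    _ ≤ (1/(2*(m:ℝ))) * Hsum (2*m) := by
        have ht := tele (2*m) (u.image e)
        have : (0:ℝ) ≤ 1/(2*(m:ℝ)) := by positivity
        exact mul_le_mul_of_nonneg_left ht this
    _ = Hsum (2*m) / (2*(m:ℝ)) := by ring
lemma sum_mid_le (m : ℕ) (hm : 2 ≤ m) (u : Finset ℤ)
    (hu : ∀ n ∈ u, 0 ≤ n ∧ n ≤ 2*(m:ℤ)) :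
    ∑ n ∈ u, fm m n ≤ Hsum (2*m) / (m:ℝ) := by
  classical
  have hmR : (0:ℝ) < (m:ℝ) := by exact_mod_cast (by omega : 0 < m)
  set e : ℤ → ℕ := fun n => n.toNat with he
  have hinj : ∀ x ∈ u, ∀ y ∈ u, e x = e y → x = y := by
    intro x hx y hy hxy
    have hx' := hu x hx; have hy' := hu y hy
    simp only [he] at hxy
    omega
  have key : ∀ n ∈ u, fm m n = fm m ((e n : ℕ) : ℤ) := by
    intro n hn
    rw [he]
    simp only []
    rw [Int.toNat_of_nonneg (hu n hn).1]
  have step0 : ∑ n ∈ u, fm m n = ∑ k ∈ u.image e, fm m (k:ℤ) := by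
    rw [Finset.sum_image hinj]
    exact Finset.sum_congr rfl key
  have hsub : u.image e ⊆ Finset.range (2*m+1) := by
    intro k hk
    rw [Finset.mem_image] at hk
    obtain ⟨n, hn, rfl⟩ := hk
    have := hu n hn
    rw [Finset.mem_range]
    show n.toNat < 2*m+1
    omega
  have step1 : ∑ k ∈ u.image e, fm m (k:ℤ) ≤ ∑ k ∈ Finset.range (2*m+1), fm m (k:ℤ) :=
    Finset.sum_le_sum_of_subset_of_nonneg hsub fun k _ _ => fm_nonneg m k
  -- peel off k = 2m and k = 0
  have e1 : ∑ k ∈ Finset.range (2*m+1), fm m (k:ℤ)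
      = ∑ i ∈ Finset.range (2*m-1), fm m ((i+1:ℕ):ℤ) := by
    rw [Finset.sum_range_succ]
    have hz : fm m ((2*m:ℕ):ℤ) = 0 := by
      rw [fm, if_neg (by push_cast; omega)]
    rw [hz, add_zero]
    rw [show 2*m = (2*m-1)+1 by omega, Finset.sum_range_succ']
    have hz0 : fm m ((0:ℕ):ℤ) = 0 := by
      rw [fm, if_neg (by simp)]
    rw [hz0, add_zero]
    simp
  have key2 : ∀ i ∈ Finset.range (2*m-1),
      fm m ((i+1:ℕ):ℤ) = (1/(2*(m:ℝ))) * (1/((i:ℝ)+1) + 1/(2*(m:ℝ)-1-(i:ℝ))) := by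
    intro i hi
    rw [Finset.mem_range] at hi
    have h1 : ((i+1:ℕ):ℤ) ≠ 0 := by push_cast; omega
    have h2 : ((i+1:ℕ):ℤ) ≠ 2*(m:ℤ) := by push_cast; omega
    have hiR : (i:ℝ) ≤ 2*(m:ℝ)-2 := by
      have : (i:ℕ) ≤ 2*m-2 := by omega
      have h6 : ((i:ℕ):ℝ) ≤ ((2*m-2:ℕ):ℝ) := by exact_mod_cast this
      have h7 : ((2*m-2:ℕ):ℝ) = 2*(m:ℝ)-2 := by
        have h8 : (2*m-2) + 2 = 2*m := by omega
        have h9 := congrArg (fun k : ℕ => (k:ℝ)) h8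
        push_cast at h9
        linarith
      linarith
    have ha : (0:ℝ) < (i:ℝ)+1 := by positivity
    have hb : (0:ℝ) < 2*(m:ℝ)-1-(i:ℝ) := by linarith
    rw [fm, if_pos ⟨h1, h2⟩]
    push_cast
    rw [abs_of_pos ha, abs_of_pos (by linarith : (0:ℝ) < 2*(m:ℝ)-((i:ℝ)+1))]
    have hid := key_id2 ha hb
    rw [show (i:ℝ)+1+(2*(m:ℝ)-1-(i:ℝ)) = 2*(m:ℝ) by ring] at hid
    rw [show 2*(m:ℝ) - ((i:ℝ)+1) = 2*(m:ℝ)-1-(i:ℝ) by ring]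
    exact hid
  have hrefl : ∑ i ∈ Finset.range (2*m-1), (1:ℝ)/(2*(m:ℝ)-1-(i:ℝ)) = Hsum (2*m-1) := by
    rw [Hsum, ← Finset.sum_range_reflect (fun j => (1:ℝ)/((j:ℝ)+1)) (2*m-1)]
    apply Finset.sum_congr rfl
    intro i hi
    rw [Finset.mem_range] at hi
    congr 1
    have h1 : 2*m-1-1-i = 2*m-2-i := by omega
    have h2 : ((2*m-2-i : ℕ):ℝ) = 2*(m:ℝ)-2-(i:ℝ) := by
      have h3 : (2*m-2-i) + (i + 2) = 2*m := by omega
      have h4 := congrArg (fun k : ℕ => (k:ℝ)) h3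
      push_cast at h4
      linarith
    rw [h1, h2]; ring
  have e3 : ∑ i ∈ Finset.range (2*m-1), fm m ((i+1:ℕ):ℤ)
      = (1/(2*(m:ℝ))) * (Hsum (2*m-1) + Hsum (2*m-1)) := by
    rw [Finset.sum_congr rfl key2, ← Finset.mul_sum, Finset.sum_add_distrib, hrefl]
    congr 2
  have hmono : Hsum (2*m-1) ≤ Hsum (2*m) := Hsum_mono (by omega)
  have hH : 0 ≤ Hsum (2*m) := Hsum_nonneg _
  calc ∑ n ∈ u, fm m n = ∑ k ∈ u.image e, fm m (k:ℤ) := step0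
    _ ≤ ∑ k ∈ Finset.range (2*m+1), fm m (k:ℤ) := step1
    _ = (1/(2*(m:ℝ))) * (Hsum (2*m-1) + Hsum (2*m-1)) := by rw [e1, e3]
    _ ≤ (1/(2*(m:ℝ))) * (Hsum (2*m) + Hsum (2*m)) := by
        apply mul_le_mul_of_nonneg_left (by linarith) (by positivity)
    _ = Hsum (2*m) / (m:ℝ) := by field_simp; ring
lemma single_le (m : ℕ) (hm : 2 ≤ m) (u : Finset ℤ) :
    ∑ n ∈ u, fm m n ≤ 2 * Hsum (2*m) / (m:ℝ) := by
  classical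
  have hmR : (0:ℝ) < (m:ℝ) := by exact_mod_cast (by omega : 0 < m)
  rw [← Finset.sum_filter_add_sum_filter_not u (fun n => n < 0),
      ← Finset.sum_filter_add_sum_filter_not (u.filter (fun n => ¬ n < 0)) (fun n => n ≤ 2*(m:ℤ))]
  have b1 := sum_neg_le m hm (u.filter (fun n => n < 0)) (fun n hn => (Finset.mem_filter.1 hn).2)
  have b2 := sum_mid_le m hm ((u.filter (fun n => ¬ n < 0)).filter (fun n => n ≤ 2*(m:ℤ)))
    (fun n hn => by
      have h1 := Finset.mem_filter.1 hn
      have h2 := Finset.mem_filter.1 h1.1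
      exact ⟨by omega, h1.2⟩)
  have b3 := sum_pos_le m hm ((u.filter (fun n => ¬ n < 0)).filter (fun n => ¬ n ≤ 2*(m:ℤ)))
    (fun n hn => by
      have h1 := Finset.mem_filter.1 hn
      omega)
  have hr : Hsum (2*m)/(2*(m:ℝ)) + (Hsum (2*m)/(m:ℝ) + Hsum (2*m)/(2*(m:ℝ)))
      = 2 * Hsum (2*m) / (m:ℝ) := by
    field_simp
    ring
  linarith

lemma single_log (m : ℕ) (hm : 2 ≤ m) (u : Finset ℤ) :
    ∑ n ∈ u, fm m n ≤ 8 * Real.log m / (m:ℝ) := by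
  have hmR : (0:ℝ) < (m:ℝ) := by exact_mod_cast (by omega : 0 < m)
  have h1 := single_le m hm u
  have hlog2l : (0.6931471803:ℝ) < Real.log 2 := Real.log_two_gt_d9
  have hlog2u : Real.log 2 < 0.6931471808 := Real.log_two_lt_d9
  have h2R : (2:ℝ) ≤ (m:ℝ) := by exact_mod_cast hm
  have hlogm : Real.log 2 ≤ Real.log m := Real.log_le_log (by norm_num) h2R
  have hH : Hsum (2*m) ≤ 1 + Real.log (2*(m:ℝ)) := by
    have h3 := Hsum_le (2*m)
    have h4 : ((2*m:ℕ):ℝ) = 2*(m:ℝ) := by push_cast; ring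
    rwa [h4] at h3
  have hsplit : Real.log (2*(m:ℝ)) = Real.log 2 + Real.log m :=
    Real.log_mul (by norm_num) (by linarith)
  have hH4 : Hsum (2*m) ≤ 4 * Real.log m := by
    rw [hsplit] at hH
    linarith
  calc ∑ n ∈ u, fm m n ≤ 2 * Hsum (2*m) / (m:ℝ) := h1
    _ ≤ 2 * (4 * Real.log m) / (m:ℝ) := by
        gcongr
    _ = 8 * Real.log m / (m:ℝ) := by ring

/-- Estimate (m45) for `i = 1`: the double sum
`Σ |q_{m₁}q_{m₂}|/(|m₁||2m−m₁||m₁+m₂||2m−m₁−m₂|) = O(M²((log m)/m)²)`. -/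
theorem stmt_9 :
    ∃ C > 0, ∀ (q : ℤ → ℂ) (M : ℝ), (∀ k : ℤ, ‖q k‖ ≤ M) →
      ∀ m : ℕ, 2 ≤ m →
      (∑' p : ℤ × ℤ,
        if p.1 ≠ 0 ∧ p.1 ≠ 2 * (m : ℤ) ∧ p.1 + p.2 ≠ 0 ∧ p.1 + p.2 ≠ 2 * (m : ℤ) then
          ‖q p.1‖ * ‖q p.2‖ /
            (|(p.1 : ℝ)| * |2 * (m : ℝ) - p.1| * |(p.1 : ℝ) + p.2| * |2 * (m : ℝ) - p.1 - p.2|)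
        else 0)
        ≤ C * M ^ 2 * (Real.log m / m) ^ 2 := by
  classical
  refine ⟨64, by norm_num, ?_⟩
  intro q M hq m hm
  have hM0 : 0 ≤ M := le_trans (norm_nonneg (q 0)) (hq 0)
  have hmR : (0:ℝ) < (m:ℝ) := by exact_mod_cast (by omega : 0 < m)
  have hLpos : 0 < Real.log m := Real.log_pos (by exact_mod_cast hm)
  set L := Real.log m with hLdef
  apply tsum_le_of_sum_le'
  · positivity
  intro s
  have hpt : ∀ p : ℤ × ℤ,
      (if p.1 ≠ 0 ∧ p.1 ≠ 2 * (m : ℤ) ∧ p.1 + p.2 ≠ 0 ∧ p.1 + p.2 ≠ 2 * (m : ℤ) then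
          ‖q p.1‖ * ‖q p.2‖ /
            (|(p.1 : ℝ)| * |2 * (m : ℝ) - p.1| * |(p.1 : ℝ) + p.2| * |2 * (m : ℝ) - p.1 - p.2|)
        else 0) ≤ M^2 * (fm m p.1 * fm m (p.1+p.2)) := by
    intro p
    by_cases hc : p.1 ≠ 0 ∧ p.1 ≠ 2 * (m : ℤ) ∧ p.1 + p.2 ≠ 0 ∧ p.1 + p.2 ≠ 2 * (m : ℤ)
    · rw [if_pos hc]
      obtain ⟨h1, h2, h3, h4⟩ := hc
      have e1 : fm m p.1 = 1/(|(p.1:ℝ)| * |2*(m:ℝ) - p.1|) := by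
        rw [fm, if_pos ⟨h1, h2⟩]
      have e2 : fm m (p.1+p.2) = 1/(|(p.1:ℝ)+p.2| * |2*(m:ℝ) - p.1 - p.2|) := by
        rw [fm, if_pos ⟨h3, h4⟩, Int.cast_add, ← sub_sub]
      have d1 : (0:ℝ) < |(p.1:ℝ)| := abs_pos.2 (Int.cast_ne_zero.2 h1)
      have d2 : (0:ℝ) < |2*(m:ℝ) - p.1| := by
        apply abs_pos.2
        have : (2*(m:ℤ) - p.1) ≠ 0 := by omega
        exact_mod_cast this
      have d3 : (0:ℝ) < |(p.1:ℝ)+p.2| := by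
        apply abs_pos.2
        exact_mod_cast h3
      have d4 : (0:ℝ) < |2*(m:ℝ) - p.1 - p.2| := by
        apply abs_pos.2
        have : (2*(m:ℤ) - p.1 - p.2) ≠ 0 := by omega
        exact_mod_cast this
      have hab : ‖q p.1‖ * ‖q p.2‖ ≤ M^2 := by
        have := mul_le_mul (hq p.1) (hq p.2) (norm_nonneg _) hM0
        rw [sq]
        exact this
      calc ‖q p.1‖ * ‖q p.2‖ /
            (|(p.1 : ℝ)| * |2 * (m : ℝ) - p.1| * |(p.1 : ℝ) + p.2| * |2 * (m : ℝ) - p.1 - p.2|)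
          = ‖q p.1‖ * ‖q p.2‖ *
            (1/(|(p.1 : ℝ)| * |2 * (m : ℝ) - p.1| * |(p.1 : ℝ) + p.2| * |2 * (m : ℝ) - p.1 - p.2|)) := by
            ring
        _ ≤ M^2 * (1/(|(p.1 : ℝ)| * |2 * (m : ℝ) - p.1| * |(p.1 : ℝ) + p.2| * |2 * (m : ℝ) - p.1 - p.2|)) := by
            apply mul_le_mul_of_nonneg_right hab
            positivity
        _ = M^2 * (fm m p.1 * fm m (p.1+p.2)) := by
            rw [e1, e2]
            field_simp
    · rw [if_neg hc]
      have := fm_nonneg m p.1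
      have := fm_nonneg m (p.1+p.2)
      positivity
  set φ : ℤ × ℤ → ℤ × ℤ := fun p => (p.1, p.1 + p.2) with hφdef
  have hφinj : ∀ x ∈ s, ∀ y ∈ s, φ x = φ y → x = y := by
    intro x _ y _ h
    simp only [hφdef, Prod.mk.injEq] at h
    exact Prod.ext h.1 (by omega)
  set t := s.image φ with ht
  have hS0 : (0:ℝ) ≤ 8 * L / (m:ℝ) := by positivity
  calc (∑ p ∈ s,
      if p.1 ≠ 0 ∧ p.1 ≠ 2 * (m : ℤ) ∧ p.1 + p.2 ≠ 0 ∧ p.1 + p.2 ≠ 2 * (m : ℤ) then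
          ‖q p.1‖ * ‖q p.2‖ /
            (|(p.1 : ℝ)| * |2 * (m : ℝ) - p.1| * |(p.1 : ℝ) + p.2| * |2 * (m : ℝ) - p.1 - p.2|)
        else 0)
      ≤ ∑ p ∈ s, M^2 * (fm m p.1 * fm m (p.1+p.2)) := Finset.sum_le_sum fun p _ => hpt p
    _ = M^2 * ∑ p ∈ s, fm m p.1 * fm m (p.1+p.2) := by rw [Finset.mul_sum]
    _ = M^2 * ∑ r ∈ t, fm m r.1 * fm m r.2 := by
        rw [ht, Finset.sum_image hφinj]
    _ ≤ M^2 * ((8 * L / (m:ℝ)) * (8 * L / (m:ℝ))) := by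
        apply mul_le_mul_of_nonneg_left ?_ (by positivity)
        have hsub : t ⊆ (t.image Prod.fst) ×ˢ (t.image Prod.snd) := by
          intro r hr
          exact Finset.mem_product.2 ⟨Finset.mem_image_of_mem _ hr, Finset.mem_image_of_mem _ hr⟩
        calc ∑ r ∈ t, fm m r.1 * fm m r.2
            ≤ ∑ r ∈ (t.image Prod.fst) ×ˢ (t.image Prod.snd), fm m r.1 * fm m r.2 :=
              Finset.sum_le_sum_of_subset_of_nonneg hsub
                (fun r _ _ => mul_nonneg (fm_nonneg m r.1) (fm_nonneg m r.2))
          _ = (∑ a ∈ t.image Prod.fst, fm m a) * (∑ b ∈ t.image Prod.snd, fm m b) := by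
              rw [Finset.sum_product]
              rw [Finset.sum_mul_sum]
          _ ≤ (8 * L / (m:ℝ)) * (8 * L / (m:ℝ)) := by
              apply mul_le_mul (single_log m hm _) (single_log m hm _)
                (Finset.sum_nonneg fun b _ => fm_nonneg m b) hS0
    _ = 64 * M ^ 2 * (L / (m:ℝ)) ^ 2 := by ring
end
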